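/- (Generalization of Proposition 3.2 of Bruns-Smith et al. to the mixed bias class.) Let β̂ ∈ ℝ^d be any vector with â(z) := ∑_j β̂_j φ_j(z), and let b̂ : Z → ℝ be any function. Let β̃ satisfy (1/n)∑_i [S_i·b̂(z_i)·(β̃ᵀφ(z_i)) + m2(O_i, b̂)] = 0. For each j with (1/n)∑_i m1(O_i, φ_j) ≠ 0, define γ_j := [(1/n)∑_i (−S_i)·b̂(z_i)·φ_j(z_i)] / [(1/n)∑_i m1(O_i, φ_j)], and set β̃_aug,j := (1−γ_j)β̂_j + γ_j β̃_j and ã_aug(z) := ∑_j β̃_aug,j φ_j(z). Then the one-step estimator χ̂(â,b̂) := (1/n)∑_i [S_i·â(z_i)·b̂(z_i) + m1(O_i, â) + m2(O_i, b̂)] equals the outcome-regression estimator (1/n)∑_i m1(O_i, ã_aug). -/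

import Mathlib

theorem stmt_5 {Z : Type*} (n d : ℕ) (S : Fin n → ℝ) (z : Fin n → Z)
    (φ : Fin d → Z → ℝ) (m1 m2 : Fin n → (Z → ℝ) → ℝ)
    (hm1 : ∀ i (c : ℝ) (f g : Z → ℝ),
      m1 i (fun x => c * f x + g x) = c * m1 i f + m1 i g)
    (hm2 : ∀ i (c : ℝ) (f g : Z → ℝ),
      m2 i (fun x => c * f x + g x) = c * m2 i f + m2 i g)
    (hden : ∀ j, (1 / (n : ℝ)) * ∑ i, m1 i (φ j) ≠ 0)
    (βh : Fin d → ℝ) (ahat : Z → ℝ) (hahat : ∀ x, ahat x = ∑ j, βh j * φ j x)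
    (bhat : Z → ℝ) (βt : Fin d → ℝ)
    (hβt : (1 / (n : ℝ)) * ∑ i,
      (S i * bhat (z i) * (∑ j, βt j * φ j (z i)) + m2 i bhat) = 0)
    (γ : Fin d → ℝ)
    (hγ : ∀ j, γ j = ((1 / (n : ℝ)) * ∑ i, (-S i) * bhat (z i) * φ j (z i))
        / ((1 / (n : ℝ)) * ∑ i, m1 i (φ j)))
    (βaug : Fin d → ℝ) (hβaug : ∀ j, βaug j = (1 - γ j) * βh j + γ j * βt j)
    (aaug : Z → ℝ) (haaug : ∀ x, aaug x = ∑ j, βaug j * φ j x) :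
    (1 / (n : ℝ)) * ∑ i, (S i * ahat (z i) * bhat (z i) + m1 i ahat + m2 i bhat)
      = (1 / (n : ℝ)) * ∑ i, m1 i aaug := by
  -- m1 is linear on finite sums
  have hm0 : ∀ i, m1 i (fun _ => 0) = 0 := by
    intro i
    have h := hm1 i 1 (fun _ => 0) (fun _ => 0)
    simp at h
    linarith
  have hlin : ∀ i (c : Fin d → ℝ),
      m1 i (fun x => ∑ j, c j * φ j x) = ∑ j, c j * m1 i (φ j) := by
    intro i c
    have : ∀ s : Finset (Fin d),
        m1 i (fun x => ∑ j ∈ s, c j * φ j x) = ∑ j ∈ s, c j * m1 i (φ j) := by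
      intro s
      induction s using Finset.induction_on with
      | empty => simpa using hm0 i
      | insert a s hnot ih =>
        have h := hm1 i (c a) (φ a) (fun x => ∑ j ∈ s, c j * φ j x)
        simp only [Finset.sum_insert hnot]
        rw [← ih, ← h]
    exact this Finset.univ
  set A : Fin d → ℝ := fun j => (1 / (n : ℝ)) * ∑ i, m1 i (φ j) with hA
  set N : Fin d → ℝ := fun j => (1 / (n : ℝ)) * ∑ i, (-S i) * bhat (z i) * φ j (z i) with hN
  have hγA : ∀ j, γ j * A j = N j := by
    intro j
    rw [hγ j]
    exact div_mul_cancel₀ _ (hden j)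
  -- RHS expansion
  have haaug' : ∀ i, m1 i aaug = ∑ j, βaug j * m1 i (φ j) := by
    intro i
    rw [show aaug = fun x => ∑ j, βaug j * φ j x from funext haaug, hlin]
  have hahat' : ∀ i, m1 i ahat = ∑ j, βh j * m1 i (φ j) := by
    intro i
    rw [show ahat = fun x => ∑ j, βh j * φ j x from funext hahat, hlin]
  have swap : ∀ c : Fin d → ℝ,
      (1 / (n : ℝ)) * ∑ i, ∑ j, c j * m1 i (φ j) = ∑ j, c j * A j := by
    intro c
    rw [Finset.sum_comm, Finset.mul_sum]
    refine Finset.sum_congr rfl fun j _ => ?_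
    rw [hA, ← Finset.mul_sum]
    ring
  have hRHS : (1 / (n : ℝ)) * ∑ i, m1 i aaug = ∑ j, βaug j * A j := by
    simp_rw [haaug']; exact swap βaug
  have hOR : (1 / (n : ℝ)) * ∑ i, m1 i ahat = ∑ j, βh j * A j := by
    simp_rw [hahat']; exact swap βh
  -- key per-j identity
  have hkey : ∀ j, βaug j * A j = βh j * A j + βt j * N j - βh j * N j := by
    intro j
    rw [hβaug j, ← hγA j]
    ring
  -- sums involving N
  have sumN : ∀ c : Fin d → ℝ, ∑ j, c j * N j
      = (1 / (n : ℝ)) * ∑ i, (-S i) * bhat (z i) * (∑ j, c j * φ j (z i)) := by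
    intro c
    simp only [hN, Finset.mul_sum]
    rw [Finset.sum_comm]
    exact Finset.sum_congr rfl fun i _ => Finset.sum_congr rfl fun j _ => by ring
  have hNβt : ∑ j, βt j * N j = (1 / (n : ℝ)) * ∑ i, m2 i bhat := by
    rw [sumN βt]
    have h := hβt
    rw [Finset.sum_add_distrib, mul_add] at h
    have he : (∑ i, (-S i) * bhat (z i) * (∑ j, βt j * φ j (z i)))
        = -∑ i, (S i * bhat (z i) * (∑ j, βt j * φ j (z i))) := by
      rw [← Finset.sum_neg_distrib]
      exact Finset.sum_congr rfl fun i _ => by ring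
    rw [he]
    linarith
  have hNβh : ∑ j, βh j * N j = -((1 / (n : ℝ)) * ∑ i, S i * ahat (z i) * bhat (z i)) := by
    have he : (∑ i, (-S i) * bhat (z i) * (∑ j, βh j * φ j (z i)))
        = -∑ i, S i * ahat (z i) * bhat (z i) := by
      rw [← Finset.sum_neg_distrib]
      exact Finset.sum_congr rfl fun i _ => by rw [hahat (z i)]; ring
    rw [sumN βh, he]
    ring
  -- assemble
  have split : (1 / (n : ℝ)) * ∑ i, (S i * ahat (z i) * bhat (z i) + m1 i ahat + m2 i bhat)
      = (1 / (n : ℝ)) * ∑ i, S i * ahat (z i) * bhat (z i)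
        + (1 / (n : ℝ)) * ∑ i, m1 i ahat + (1 / (n : ℝ)) * ∑ i, m2 i bhat := by
    rw [← mul_add, ← mul_add, ← Finset.sum_add_distrib, ← Finset.sum_add_distrib]
  rw [split, hRHS]
  have : ∑ j, βaug j * A j = ∑ j, (βh j * A j + βt j * N j - βh j * N j) :=
    Finset.sum_congr rfl fun j _ => hkey j
  rw [this]
  simp_rw [Finset.sum_sub_distrib, Finset.sum_add_distrib]
  rw [hNβt, hNβh, ← hOR]
  ring
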